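/- Let z₁, z₂, z₃ : ℝ → ℂ³ satisfy ω(z₂,z₃) = ω(z₁,z₃) = ω(z₁,z₂) = 0 and the evolution equations dz₁/dt = 2 z₂×z₃, dz₂/dt = 2 z₁×z₃, dz₃/dt = −2 z₁×z₂ for all t ∈ ℝ, and suppose that for every t ∈ ℝ the real span of {z₁(t), z₂(t), z₃(t)} in ℂ³ has dimension 2. Then there exist a, b, c, d ∈ ℝ with δ = ad − bc ≠ 0 such that the transformed functions z₁′(t) = ½(a²+b²+c²+d²)z₁(δt) + ½(a²+b²−c²−d²)z₂(δt) + (ac+bd)z₃(δt), z₂′(t) = ½(a²−b²+c²−d²)z₁(δt) + ½(a²−b²−c²+d²)z₂(δt) + (ac−bd)z₃(δt), z₃′(t) = (ab+cd)z₁(δt) + (ab−cd)z₂(δt) + (ad+bc)z₃(δt) satisfy z₁′(0) = z₂′(0) and |z₃′(0)| = 1. -/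

import Mathlib

noncomputable section

open Complex ComplexConjugate

/-- ℂ³ as triples of complex numbers. -/
abbrev C3 := ℂ × ℂ × ℂ

/-- The standard Kähler form ω(u,v) = Σ Im(conj(u_j)·v_j). -/
def omega3 (u v : C3) : ℝ :=
  (conj u.1 * v.1).im + (conj u.2.1 * v.2.1).im + (conj u.2.2 * v.2.2).im

/-- The antibilinear cross product on ℂ³. -/
def cross3 (u v : C3) : C3 :=
  ((1/2 : ℂ) * conj (u.2.1 * v.2.2 - u.2.2 * v.2.1),
   (1/2 : ℂ) * conj (u.2.2 * v.1 - u.1 * v.2.2),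
   (1/2 : ℂ) * conj (u.1 * v.2.1 - u.2.1 * v.1))

/-- Euclidean norm on ℂ³. -/
def enorm3 (u : C3) : ℝ :=
  Real.sqrt (Complex.normSq u.1 + Complex.normSq u.2.1 + Complex.normSq u.2.2)

namespace S5

def Det3 (u v w : C3) : ℂ :=
  u.1 * (v.2.1*w.2.2 - v.2.2*w.2.1) + u.2.1 * (v.2.2*w.1 - v.1*w.2.2)
    + u.2.2 * (v.1*w.2.1 - v.2.1*w.1)

def nsq (u : C3) : ℝ := Complex.normSq u.1 + Complex.normSq u.2.1 + Complex.normSq u.2.2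

lemma det_deriv_identity (u v w : C3) :
    Det3 ((2:ℝ)•cross3 v w) v w + Det3 u ((2:ℝ)•cross3 u w) w + Det3 u v ((-2:ℝ)•cross3 u v)
    = ((4 * (nsq (cross3 v w) - nsq (cross3 u w) - nsq (cross3 u v)) : ℝ) : ℂ) := by
  simp only [nsq]
  push_cast
  simp only [← Complex.mul_conj]
  simp only [Det3, cross3, Prod.smul_fst, Prod.smul_snd, Complex.real_smul,
    map_mul, map_sub, Complex.conj_conj, map_div₀, map_one, map_ofNat]
  push_cast
  ring

lemma cross_comb (p q : ℝ) (u v w : C3) :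
    cross3 (p•u + q•v) w = p • cross3 u w + q • cross3 v w := by
  simp only [cross3, Prod.ext_iff, Prod.smul_fst, Prod.smul_snd, Prod.fst_add, Prod.snd_add,
    Complex.real_smul, map_add, map_mul, map_sub, Complex.conj_conj, Complex.conj_ofReal]
  refine ⟨by ring, by ring, by ring⟩

lemma cross_comb_right (p q : ℝ) (u v w : C3) :
    cross3 w (p•u + q•v) = p • cross3 w u + q • cross3 w v := by
  simp only [cross3, Prod.ext_iff, Prod.smul_fst, Prod.smul_snd, Prod.fst_add, Prod.snd_add,
    Complex.real_smul, map_add, map_mul, map_sub, Complex.conj_conj, Complex.conj_ofReal]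
  refine ⟨by ring, by ring, by ring⟩

lemma cross3_self (u : C3) : cross3 u u = 0 := by
  simp only [cross3, Prod.ext_iff, Prod.fst_zero, Prod.snd_zero, map_sub]
  refine ⟨by ring, by ring, by ring⟩

lemma cross3_antisymm (u v : C3) : cross3 u v = - cross3 v u := by
  simp only [cross3, Prod.ext_iff, Prod.fst_neg, Prod.snd_neg, map_sub]
  refine ⟨by ring, by ring, by ring⟩

lemma cross3_zero_right (u : C3) : cross3 u 0 = 0 := by
  simp only [cross3, Prod.ext_iff, Prod.fst_zero, Prod.snd_zero, map_sub]
  norm_num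

lemma cross3_zero_left (u : C3) : cross3 0 u = 0 := by
  simp only [cross3, Prod.ext_iff, Prod.fst_zero, Prod.snd_zero, map_sub]
  norm_num

lemma cross_smul_left (r : ℝ) (u w : C3) : cross3 (r • u) w = r • cross3 u w := by
  have := cross_comb r 0 u u w
  simpa using this

lemma cross_smul_right (r : ℝ) (u w : C3) : cross3 w (r • u) = r • cross3 w u := by
  have := cross_comb_right r 0 u u w
  simpa using this

lemma nsq_nonneg (u : C3) : 0 ≤ nsq u := by
  have := Complex.normSq_nonneg u.1
  have := Complex.normSq_nonneg u.2.1
  have := Complex.normSq_nonneg u.2.2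
  unfold nsq; linarith

lemma nsq_eq_zero_iff (u : C3) : nsq u = 0 ↔ u = 0 := by
  constructor
  · intro h
    have h1 := Complex.normSq_nonneg u.1
    have h2 := Complex.normSq_nonneg u.2.1
    have h3 := Complex.normSq_nonneg u.2.2
    unfold nsq at h
    have e1 : Complex.normSq u.1 = 0 := by linarith
    have e2 : Complex.normSq u.2.1 = 0 := by linarith
    have e3 : Complex.normSq u.2.2 = 0 := by linarith
    have : u = (u.1, u.2.1, u.2.2) := rfl
    rw [this, Complex.normSq_eq_zero.mp e1, Complex.normSq_eq_zero.mp e2,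
      Complex.normSq_eq_zero.mp e3]
    rfl
  · rintro rfl; simp [nsq]

lemma nsq_smul (r : ℝ) (u : C3) : nsq (r • u) = r^2 * nsq u := by
  simp only [nsq, Prod.smul_fst, Prod.smul_snd, Complex.real_smul, Complex.normSq_mul,
    Complex.normSq_ofReal]
  ring

lemma hasDerivAt_Det {f g h : ℝ → C3} {f' g' h' : C3} {t : ℝ}
    (hf : HasDerivAt f f' t) (hg : HasDerivAt g g' t) (hh : HasDerivAt h h' t) :
    HasDerivAt (fun s => Det3 (f s) (g s) (h s))
      (Det3 f' (g t) (h t) + Det3 (f t) g' (h t) + Det3 (f t) (g t) h') t := by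
  have f1 : HasDerivAt (fun s => (f s).1) f'.1 t := hf.fst
  have f2 : HasDerivAt (fun s => (f s).2.1) f'.2.1 t := hf.snd.fst
  have f3 : HasDerivAt (fun s => (f s).2.2) f'.2.2 t := hf.snd.snd
  have g1 : HasDerivAt (fun s => (g s).1) g'.1 t := hg.fst
  have g2 : HasDerivAt (fun s => (g s).2.1) g'.2.1 t := hg.snd.fst
  have g3 : HasDerivAt (fun s => (g s).2.2) g'.2.2 t := hg.snd.snd
  have h1 : HasDerivAt (fun s => (h s).1) h'.1 t := hh.fst
  have h2 : HasDerivAt (fun s => (h s).2.1) h'.2.1 t := hh.snd.fst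
  have h3 : HasDerivAt (fun s => (h s).2.2) h'.2.2 t := hh.snd.snd
  have big := ((f1.mul ((g2.mul h3).sub (g3.mul h2))).add
      (f2.mul ((g3.mul h1).sub (g1.mul h3)))).add
      (f3.mul ((g1.mul h2).sub (g2.mul h1)))
  convert big using 1
  case e'_4 => rfl
  case e'_8 =>
    funext s
    simp only [Det3, Pi.add_apply, Pi.mul_apply, Pi.sub_apply]
  case e'_9 =>
    simp only [Det3, Pi.mul_apply, Pi.sub_apply]
    ring

lemma det_zero_of_rel (u v w : C3) (α β γ : ℝ)
    (h : α • u + β • v + γ • w = 0) (hne : α ≠ 0 ∨ β ≠ 0 ∨ γ ≠ 0) :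
    Det3 u v w = 0 := by
  have h1 : (α:ℂ) * u.1 + β * v.1 + γ * w.1 = 0 := by
    have := congrArg Prod.fst h
    simpa [Complex.real_smul] using this
  have h2 : (α:ℂ) * u.2.1 + β * v.2.1 + γ * w.2.1 = 0 := by
    have := congrArg (fun x : C3 => x.2.1) h
    simpa [Complex.real_smul] using this
  have h3 : (α:ℂ) * u.2.2 + β * v.2.2 + γ * w.2.2 = 0 := by
    have := congrArg (fun x : C3 => x.2.2) h
    simpa [Complex.real_smul] using this
  rcases hne with hα | hβ | hγ
  · have : (α:ℂ) * Det3 u v w = 0 := by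
      simp only [Det3]
      linear_combination (v.2.1*w.2.2 - v.2.2*w.2.1) * h1 + (v.2.2*w.1 - v.1*w.2.2) * h2
        + (v.1*w.2.1 - v.2.1*w.1) * h3
    rcases mul_eq_zero.mp this with h' | h'
    · exact absurd (Complex.ofReal_eq_zero.mp h') hα
    · exact h'
  · have : (β:ℂ) * Det3 u v w = 0 := by
      simp only [Det3]
      linear_combination (u.2.2*w.2.1 - u.2.1*w.2.2) * h1 + (u.1*w.2.2 - u.2.2*w.1) * h2
        + (u.2.1*w.1 - u.1*w.2.1) * h3
    rcases mul_eq_zero.mp this with h' | h'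
    · exact absurd (Complex.ofReal_eq_zero.mp h') hβ
    · exact h'
  · have : (γ:ℂ) * Det3 u v w = 0 := by
      simp only [Det3]
      linear_combination (u.2.1*v.2.2 - u.2.2*v.2.1) * h1 + (u.2.2*v.1 - u.1*v.2.2) * h2
        + (u.1*v.2.1 - u.2.1*v.1) * h3
    rcases mul_eq_zero.mp this with h' | h'
    · exact absurd (Complex.ofReal_eq_zero.mp h') hγ
    · exact h'

lemma enorm3_smul (r : ℝ) (u : C3) : enorm3 (r • u) = |r| * enorm3 u := by
  unfold enorm3
  have : Complex.normSq (r • u : C3).1 + Complex.normSq (r • u : C3).2.1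
      + Complex.normSq (r • u : C3).2.2
      = r^2 * (Complex.normSq u.1 + Complex.normSq u.2.1 + Complex.normSq u.2.2) := by
    simp only [Prod.smul_fst, Prod.smul_snd, Complex.real_smul, Complex.normSq_mul,
      Complex.normSq_ofReal]
    ring
  rw [this, Real.sqrt_mul (sq_nonneg r), Real.sqrt_sq_eq_abs]

lemma vprop (u v : C3) (hc : cross3 u v = 0) (hw : omega3 u v = 0) (hu : u ≠ 0) :
    ∃ r : ℝ, v = r • u := by
  have e1 : u.2.1 * v.2.2 = u.2.2 * v.2.1 := by
    have := congrArg Prod.fst hc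
    simp only [cross3, Prod.fst_zero, mul_eq_zero, map_eq_zero, sub_eq_zero] at this
    rcases this with h | h
    · norm_num at h
    · exact h
  have e2 : u.2.2 * v.1 = u.1 * v.2.2 := by
    have := congrArg (fun x : C3 => x.2.1) hc
    simp only [cross3, Prod.snd_zero, Prod.fst_zero, mul_eq_zero, map_eq_zero, sub_eq_zero] at this
    rcases this with h | h
    · norm_num at h
    · exact h
  have e3 : u.1 * v.2.1 = u.2.1 * v.1 := by
    have := congrArg (fun x : C3 => x.2.2) hc
    simp only [cross3, Prod.snd_zero, mul_eq_zero, map_eq_zero, sub_eq_zero] at this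
    rcases this with h | h
    · norm_num at h
    · exact h
  have hcomp : u.1 ≠ 0 ∨ u.2.1 ≠ 0 ∨ u.2.2 ≠ 0 := by
    by_contra hcon
    push_neg at hcon
    exact hu (by rw [show u = (u.1, u.2.1, u.2.2) from rfl, hcon.1, hcon.2.1, hcon.2.2]; rfl)
  obtain ⟨c, hv1, hv2, hv3⟩ : ∃ c : ℂ, v.1 = c * u.1 ∧ v.2.1 = c * u.2.1 ∧ v.2.2 = c * u.2.2 := by
    rcases hcomp with h | h | h
    · refine ⟨v.1 / u.1, by field_simp, ?_, ?_⟩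
      · field_simp; linear_combination e3
      · field_simp; linear_combination -e2
    · refine ⟨v.2.1 / u.2.1, ?_, by field_simp, ?_⟩
      · field_simp; linear_combination -e3
      · field_simp; linear_combination e1
    · refine ⟨v.2.2 / u.2.2, ?_, ?_, by field_simp⟩
      · field_simp; linear_combination e2
      · field_simp; linear_combination -e1
  have hS : 0 < Complex.normSq u.1 + Complex.normSq u.2.1 + Complex.normSq u.2.2 := by
    have n1 := Complex.normSq_nonneg u.1
    have n2 := Complex.normSq_nonneg u.2.1
    have n3 := Complex.normSq_nonneg u.2.2
    rcases hcomp with h | h | h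
    · have := Complex.normSq_pos.mpr h; linarith
    · have := Complex.normSq_pos.mpr h; linarith
    · have := Complex.normSq_pos.mpr h; linarith
  have him : c.im = 0 := by
    have hω : omega3 u v
        = c.im * (Complex.normSq u.1 + Complex.normSq u.2.1 + Complex.normSq u.2.2) := by
      simp only [omega3, hv1, hv2, hv3]
      rw [show conj u.1 * (c * u.1) = c * (u.1 * conj u.1) from by ring,
        show conj u.2.1 * (c * u.2.1) = c * (u.2.1 * conj u.2.1) from by ring,
        show conj u.2.2 * (c * u.2.2) = c * (u.2.2 * conj u.2.2) from by ring,
        Complex.mul_conj, Complex.mul_conj, Complex.mul_conj]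
      simp only [Complex.mul_im, Complex.ofReal_re, Complex.ofReal_im]
      ring
    rw [hw] at hω
    rcases mul_eq_zero.mp hω.symm with h | h
    · exact h
    · exact absurd h (ne_of_gt hS)
  refine ⟨c.re, ?_⟩
  have hc' : c = (c.re : ℂ) := Complex.ext rfl (by simpa using him)
  have hv : v = (v.1, v.2.1, v.2.2) := rfl
  rw [hv, hv1, hv2, hv3, hc']
  show _ = ((c.re : ℝ) • u.1, (c.re : ℝ) • u.2.1, (c.re : ℝ) • u.2.2)
  simp [Complex.real_smul]

end S5

theorem statement_5
    (z₁ z₂ z₃ : ℝ → C3)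
    (hc1 : ∀ t : ℝ, omega3 (z₂ t) (z₃ t) = 0)
    (hc2 : ∀ t : ℝ, omega3 (z₁ t) (z₃ t) = 0)
    (hc3 : ∀ t : ℝ, omega3 (z₁ t) (z₂ t) = 0)
    (hz1 : ∀ t : ℝ, HasDerivAt z₁ ((2:ℝ) • cross3 (z₂ t) (z₃ t)) t)
    (hz2 : ∀ t : ℝ, HasDerivAt z₂ ((2:ℝ) • cross3 (z₁ t) (z₃ t)) t)
    (hz3 : ∀ t : ℝ, HasDerivAt z₃ ((-2:ℝ) • cross3 (z₁ t) (z₂ t)) t)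
    (hdim : ∀ t : ℝ,
      Module.finrank ℝ (Submodule.span ℝ ({z₁ t, z₂ t, z₃ t} : Set C3)) = 2) :
    ∃ a b c d : ℝ, a * d - b * c ≠ 0 ∧
      (((1/2 : ℝ) * (a^2 + b^2 + c^2 + d^2)) • z₁ 0
        + ((1/2 : ℝ) * (a^2 + b^2 - c^2 - d^2)) • z₂ 0 + (a*c + b*d) • z₃ 0
       = ((1/2 : ℝ) * (a^2 - b^2 + c^2 - d^2)) • z₁ 0
        + ((1/2 : ℝ) * (a^2 - b^2 - c^2 + d^2)) • z₂ 0 + (a*c - b*d) • z₃ 0) ∧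
      enorm3 ((a*b + c*d) • z₁ 0 + (a*b - c*d) • z₂ 0 + (a*d + b*c) • z₃ 0) = 1 := by
  classical
  have hdep : ∀ t, ∃ g : Fin 3 → ℝ,
      g 0 • z₁ t + g 1 • z₂ t + g 2 • z₃ t = 0 ∧ ∃ i, g i ≠ 0 := by
    intro t
    have hnl : ¬ LinearIndependent ℝ ![z₁ t, z₂ t, z₃ t] := by
      intro hli
      have h3 := finrank_span_eq_card hli
      have hr : Set.range ![z₁ t, z₂ t, z₃ t] = {z₁ t, z₂ t, z₃ t} := by
        ext x
        simp [Matrix.range_cons, Matrix.range_empty]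
        tauto
      rw [hr, hdim t] at h3
      simp at h3
    obtain ⟨g, hg, hi⟩ := Fintype.not_linearIndependent_iff.mp hnl
    exact ⟨g, by simpa [Fin.sum_univ_three] using hg, hi⟩
  have hdet : ∀ t, S5.Det3 (z₁ t) (z₂ t) (z₃ t) = 0 := by
    intro t
    obtain ⟨g, hg, i, hi⟩ := hdep t
    refine S5.det_zero_of_rel _ _ _ (g 0) (g 1) (g 2) hg ?_
    fin_cases i
    · exact Or.inl hi
    · exact Or.inr (Or.inl hi)
    · exact Or.inr (Or.inr hi)
  have hD := S5.hasDerivAt_Det (hz1 0) (hz2 0) (hz3 0)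
  rw [show (fun s => S5.Det3 (z₁ s) (z₂ s) (z₃ s)) = fun _ => (0:ℂ) from funext hdet] at hD
  have hE := (hasDerivAt_const (0:ℝ) (0:ℂ)).unique hD
  rw [S5.det_deriv_identity] at hE
  have hbal : S5.nsq (cross3 (z₂ 0) (z₃ 0))
      = S5.nsq (cross3 (z₁ 0) (z₃ 0)) + S5.nsq (cross3 (z₁ 0) (z₂ 0)) := by
    have h0 := Complex.ofReal_eq_zero.mp hE.symm
    linarith
  have hc23 : cross3 (z₂ 0) (z₃ 0) ≠ 0 := by
    intro h0
    have hn23 : S5.nsq (cross3 (z₂ 0) (z₃ 0)) = 0 := by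
      rw [h0]; exact (S5.nsq_eq_zero_iff 0).mpr rfl
    have hn13 := S5.nsq_nonneg (cross3 (z₁ 0) (z₃ 0))
    have hn12 := S5.nsq_nonneg (cross3 (z₁ 0) (z₂ 0))
    have h13 : cross3 (z₁ 0) (z₃ 0) = 0 := (S5.nsq_eq_zero_iff _).mp (by linarith)
    have h12 : cross3 (z₁ 0) (z₂ 0) = 0 := (S5.nsq_eq_zero_iff _).mp (by linarith)
    have key : ∀ e : C3, z₁ 0 ∈ Submodule.span ℝ ({e} : Set C3)
        → z₂ 0 ∈ Submodule.span ℝ ({e} : Set C3)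
        → z₃ 0 ∈ Submodule.span ℝ ({e} : Set C3) → False := by
      intro e he1 he2 he3
      have hle : Submodule.span ℝ ({z₁ 0, z₂ 0, z₃ 0} : Set C3)
          ≤ Submodule.span ℝ ({e} : Set C3) := by
        rw [Submodule.span_le]
        intro x hx
        simp only [Set.mem_insert_iff, Set.mem_singleton_iff] at hx
        rcases hx with rfl | rfl | rfl
        exacts [he1, he2, he3]
      have hmono := Submodule.finrank_mono (R := ℝ) hle
      rw [hdim 0] at hmono
      have hone : Module.finrank ℝ (Submodule.span ℝ ({e} : Set C3)) ≤ 1 := by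
        simpa using finrank_span_le_card ({e} : Set C3)
      omega
    by_cases h1 : z₁ 0 = 0
    · by_cases h2 : z₂ 0 = 0
      · exact key (z₃ 0) (by simp [h1]) (by simp [h2]) (Submodule.mem_span_singleton_self _)
      · obtain ⟨r, hr⟩ := S5.vprop (z₂ 0) (z₃ 0) h0 (hc1 0) h2
        exact key (z₂ 0) (by simp [h1]) (Submodule.mem_span_singleton_self _)
          (by rw [hr]; exact Submodule.smul_mem _ r (Submodule.mem_span_singleton_self _))
    · obtain ⟨r, hr⟩ := S5.vprop (z₁ 0) (z₂ 0) h12 (hc3 0) h1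
      obtain ⟨r', hr'⟩ := S5.vprop (z₁ 0) (z₃ 0) h13 (hc2 0) h1
      exact key (z₁ 0) (Submodule.mem_span_singleton_self _)
        (by rw [hr]; exact Submodule.smul_mem _ _ (Submodule.mem_span_singleton_self _))
        (by rw [hr']; exact Submodule.smul_mem _ _ (Submodule.mem_span_singleton_self _))
  have hNpos : 0 < S5.nsq (cross3 (z₂ 0) (z₃ 0)) :=
    lt_of_le_of_ne (S5.nsq_nonneg _) (fun h => hc23 ((S5.nsq_eq_zero_iff _).mp h.symm))
  obtain ⟨g, hg, i, hi⟩ := hdep 0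
  have hα : g 0 ≠ 0 := by
    intro h0
    rw [h0, zero_smul, zero_add] at hg
    have hcz : cross3 (z₂ 0) (z₃ 0) = 0 := by
      by_cases hb : g 1 = 0
      · have hg2 : g 2 ≠ 0 := by
          fin_cases i
          · exact absurd h0 hi
          · exact absurd hb hi
          · exact hi
        rw [hb, zero_smul, zero_add] at hg
        have hz3' : z₃ 0 = ((g 2)⁻¹ * 0) • z₃ 0 := by
          have := congrArg (fun x => (g 2)⁻¹ • x) hg
          simpa [smul_smul, inv_mul_cancel₀ hg2] using this
        have hz3'' : z₃ 0 = 0 := by simpa using hz3'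
        rw [hz3'', S5.cross3_zero_right]
      · have h2 : g 1 • z₂ 0 = (-(g 2)) • z₃ 0 := by
          rw [neg_smul]; exact eq_neg_of_add_eq_zero_left hg
        have hz2' : z₂ 0 = ((g 1)⁻¹ * (-(g 2))) • z₃ 0 := by
          have := congrArg (fun x => (g 1)⁻¹ • x) h2
          simpa [smul_smul, inv_mul_cancel₀ hb] using this
        rw [hz2', S5.cross_smul_left, S5.cross3_self, smul_zero]
    exact hc23 hcz
  obtain ⟨p, q, hz⟩ : ∃ p q : ℝ, z₁ 0 = p • z₂ 0 + q • z₃ 0 := by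
    refine ⟨(g 0)⁻¹ * (-(g 1)), (g 0)⁻¹ * (-(g 2)), ?_⟩
    have h2 : g 0 • z₁ 0 = (-(g 1)) • z₂ 0 + (-(g 2)) • z₃ 0 := by
      rw [neg_smul, neg_smul]
      have h' := hg
      rw [add_assoc] at h'
      have h3 := eq_neg_of_add_eq_zero_left h'
      rw [h3]; abel
    have := congrArg (fun x => (g 0)⁻¹ • x) h2
    simpa [smul_add, smul_smul, inv_mul_cancel₀ hα] using this
  have hc13 : cross3 (z₁ 0) (z₃ 0) = p • cross3 (z₂ 0) (z₃ 0) := by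
    rw [hz, S5.cross_comb, S5.cross3_self, smul_zero, add_zero]
  have hc12 : cross3 (z₁ 0) (z₂ 0) = (-q) • cross3 (z₂ 0) (z₃ 0) := by
    rw [hz, S5.cross_comb, S5.cross3_self, smul_zero, zero_add,
      S5.cross3_antisymm (z₃ 0) (z₂ 0), smul_neg, ← neg_smul]
  have hpq : p^2 + q^2 = 1 := by
    have h1 : (p^2 + q^2) * S5.nsq (cross3 (z₂ 0) (z₃ 0))
        = 1 * S5.nsq (cross3 (z₂ 0) (z₃ 0)) := by
      rw [one_mul]
      conv_rhs => rw [hbal, hc13, hc12, S5.nsq_smul, S5.nsq_smul]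
      ring
    exact mul_right_cancel₀ (ne_of_gt hNpos) h1
  have hple : p ≤ 1 := by nlinarith
  obtain ⟨b, hbnn, hb2⟩ : ∃ b : ℝ, 0 ≤ b ∧ b^2 = (1 - p)/2 :=
    ⟨Real.sqrt ((1 - p)/2), Real.sqrt_nonneg _, Real.sq_sqrt (by linarith)⟩
  obtain ⟨d, hbd1, hd2⟩ : ∃ d : ℝ, 2*(b*d) = -q ∧ d^2 = (1+p)/2 := by
    by_cases hb0 : b = 0
    · have hp1 : p = 1 := by
        have : (1 - p)/2 = 0 := by rw [← hb2, hb0]; ring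
        linarith
      have hq2 : q^2 = 0 := by nlinarith
      have hq0 : q = 0 := sq_eq_zero_iff.mp hq2
      refine ⟨1, ?_, ?_⟩
      · rw [hb0, hq0]; ring
      · rw [hp1]; norm_num
    · refine ⟨-q/(2*b), ?_, ?_⟩
      · field_simp
      · field_simp
        nlinarith [hb2, hpq]
  set v0 : C3 := (-q) • z₂ 0 + p • z₃ 0 with hv0def
  have hv0 : v0 ≠ 0 := by
    intro h0
    have hp0 : p • cross3 (z₂ 0) (z₃ 0) = 0 := by
      have hcc := S5.cross_comb_right (-q) p (z₂ 0) (z₃ 0) (z₂ 0)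
      rw [← hv0def, h0, S5.cross3_zero_right, S5.cross3_self, smul_zero, zero_add] at hcc
      exact hcc.symm
    have hq0 : q • cross3 (z₂ 0) (z₃ 0) = 0 := by
      have hcc := S5.cross_comb (-q) p (z₂ 0) (z₃ 0) (z₃ 0)
      rw [← hv0def, h0, S5.cross3_zero_left, S5.cross3_self, smul_zero, add_zero] at hcc
      have : (-q) • cross3 (z₂ 0) (z₃ 0) = 0 := hcc.symm
      simpa [neg_smul, neg_eq_zero] using this
    have hp' : p = 0 := by
      rcases smul_eq_zero.mp hp0 with h | h
      · exact h
      · exact absurd h hc23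
    have hq' : q = 0 := by
      rcases smul_eq_zero.mp hq0 with h | h
      · exact h
      · exact absurd h hc23
    rw [hp', hq'] at hpq
    norm_num at hpq
  set E : ℝ := enorm3 v0 with hEdef
  have hEpos : 0 < E := by
    rw [hEdef]
    unfold enorm3
    apply Real.sqrt_pos.mpr
    have hne : S5.nsq v0 ≠ 0 := fun h => hv0 ((S5.nsq_eq_zero_iff _).mp h)
    have := lt_of_le_of_ne (S5.nsq_nonneg v0) (Ne.symm hne)
    exact this
  refine ⟨E⁻¹ * d, b, -(E⁻¹ * b), d, ?_, ?_, ?_⟩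
  · have heq : (E⁻¹ * d) * d - b * (-(E⁻¹ * b)) = E⁻¹ * (b^2 + d^2) := by ring
    rw [heq, hb2, hd2]
    have hsum : (1 - p)/2 + (1 + p)/2 = 1 := by ring
    rw [hsum, mul_one]
    exact inv_ne_zero (ne_of_gt hEpos)
  · rw [hz]
    match_scalars
    · linear_combination (p+1)*hb2 + (p-1)*hd2
    · linear_combination q*hb2 + q*hd2 + hbd1
  · have hVeq : ((E⁻¹*d)*b + (-(E⁻¹*b))*d) • z₁ 0 + ((E⁻¹*d)*b - (-(E⁻¹*b))*d) • z₂ 0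
        + ((E⁻¹*d)*d + b*(-(E⁻¹*b))) • z₃ 0 = E⁻¹ • v0 := by
      rw [hv0def]
      match_scalars
      · ring
      · linear_combination E⁻¹ * hbd1
      · linear_combination E⁻¹ * hd2 - E⁻¹ * hb2
    rw [hVeq, S5.enorm3_smul, abs_of_pos (inv_pos.mpr hEpos), ← hEdef,
      inv_mul_cancel₀ (ne_of_gt hEpos)]
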